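/- There exists a partial group L and partial normal subgroups M, N of L such that the product MN = {Π(m,n) : m ∈ M, n ∈ N, (m,n) ∈ D} is not a partial normal subgroup of L. Concretely: let G₁ ≅ C₂ × C₄ and let G₂ be dihedral of order 16, forming an amalgam with G₁ ∩ G₂ ≅ C₂ × C₂ and Φ(G₁) = Z(G₂); let L = G₁ ∪ G₂ with D = W(G₁) ∪ W(G₂), and let M, N be the two cyclic subgroups of G₁ of order 4. Then M and N are partial normal subgroups of L but MN = G₁ is not a partial normal subgroup of L. -/

import Mathlib

universe u v w

/-- A partial group in the sense of Chermak: a set `L` with a set `D` of words,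
a (total, but only meaningful on `D`) product `prod`, and an involutory inversion. -/
structure PartialGroup (L : Type u) where
  D : Set (List L)
  prod : List L → L
  inv : L → L
  nil_mem : ([] : List L) ∈ D
  single_mem : ∀ f : L, [f] ∈ D
  append_closed : ∀ u v : List L, u ++ v ∈ D → u ∈ D ∧ v ∈ D
  prod_single : ∀ f : L, prod [f] = f
  prod_assoc : ∀ u v w : List L, u ++ v ++ w ∈ D →
    (u ++ [prod v] ++ w ∈ D ∧ prod (u ++ v ++ w) = prod (u ++ [prod v] ++ w))
  inv_inv : ∀ f : L, inv (inv f) = f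
  inv_word_mem : ∀ u ∈ D, (u.reverse.map inv) ++ u ∈ D
  prod_inv_word : ∀ u ∈ D, prod ((u.reverse.map inv) ++ u) = prod []

namespace PartialGroup

variable {L : Type u} (PG : PartialGroup L)

/-- The identity element `1 = Π(∅)`. -/
def one : L := PG.prod []

/-- Conjugation `x^g = Π(g⁻¹, x, g)` (only meaningful when `(g⁻¹,x,g) ∈ D`). -/
def conj (g x : L) : L := PG.prod [PG.inv g, x, g]

/-- `D(g)`: the set of `x` for which conjugation by `g` is defined. -/
def Dset (g : L) : Set L := {x | [PG.inv g, x, g] ∈ PG.D}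

/-- `P^g`, the image of a subset under conjugation by `g`. -/
def conjSet (g : L) (P : Set L) : Set L := PG.conj g '' P

/-- A partial subgroup: nonempty, closed under inversion and under defined products. -/
def IsPartialSubgroup (H : Set L) : Prop :=
  H.Nonempty ∧ (∀ h ∈ H, PG.inv h ∈ H) ∧
    ∀ v ∈ PG.D, (∀ x ∈ v, x ∈ H) → PG.prod v ∈ H

/-- A partial normal subgroup: a partial subgroup closed under defined conjugation. -/
def IsPartialNormal (N : Set L) : Prop :=
  PG.IsPartialSubgroup N ∧ ∀ x ∈ N, ∀ f : L, x ∈ PG.Dset f → PG.conj f x ∈ N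

/-- A subgroup of a partial group: a partial subgroup all of whose words lie in `D`. -/
def IsSubgroup (H : Set L) : Prop :=
  PG.IsPartialSubgroup H ∧ ∀ w : List L, (∀ x ∈ w, x ∈ H) → w ∈ PG.D

/-- A `p`-subgroup: a subgroup of `p`-power order. -/
def IsPSubgroup (p : ℕ) (H : Set L) : Prop :=
  PG.IsSubgroup H ∧ ∃ k : ℕ, Nat.card H = p ^ k

/-- The product `MN = {Π(m,n) : m ∈ M, n ∈ N, (m,n) ∈ D}` of two subsets. -/
def setProd (M N : Set L) : Set L :=
  {z | ∃ m ∈ M, ∃ n ∈ N, [m, n] ∈ PG.D ∧ z = PG.prod [m, n]}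

/-- The product `N₁N₂⋯N_l` of a family of subsets. -/
def multiProd {l : ℕ} (N : Fin l → Set L) : Set L :=
  {z | ∃ n : Fin l → L, List.ofFn n ∈ PG.D ∧ (∀ i, n i ∈ N i) ∧ z = PG.prod (List.ofFn n)}

/-- A word is in `D` via a chain of groups from `Δ`. -/
def InDVia (Δ : Set (Set L)) (wrd : List L) : Prop :=
  ∃ P : Fin (wrd.length + 1) → Set L, (∀ i, P i ∈ Δ) ∧
    ∀ i : Fin wrd.length,
      P i.castSucc ⊆ PG.Dset (wrd.get i) ∧ PG.conjSet (wrd.get i) (P i.castSucc) = P i.succ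

/-- `S_g = {s ∈ S : (g⁻¹,s,g) ∈ D and s^g ∈ S}`. -/
def Sg (S : Set L) (g : L) : Set L :=
  {s ∈ S | s ∈ PG.Dset g ∧ PG.conj g s ∈ S}

/-- `S_w` for a word `w = (g₁,…,gₙ)`: those `s ∈ S` admitting a chain
`s = x₀, x₁, …, xₙ ∈ S` with `x_{i-1}^{g_i} = x_i`. -/
def Sw (S : Set L) (wrd : List L) : Set L :=
  {s ∈ S | ∃ x : Fin (wrd.length + 1) → L, (∀ i, x i ∈ S) ∧ x 0 = s ∧
    ∀ i : Fin wrd.length,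
      x i.castSucc ∈ PG.Dset (wrd.get i) ∧ PG.conj (wrd.get i) (x i.castSucc) = x i.succ}

/-- The (right) coset `Kf = {kf : k ∈ K, (k,f) ∈ D}`. -/
def coset (K : Set L) (f : L) : Set L :=
  {z | ∃ k ∈ K, [k, f] ∈ PG.D ∧ z = PG.prod [k, f]}

/-- A maximal coset of `K`: a coset maximal under inclusion among cosets of `K`. -/
def IsMaxCoset (K C : Set L) : Prop :=
  (∃ f, C = PG.coset K f) ∧ ∀ g : L, C ⊆ PG.coset K g → C = PG.coset K g

/-- `f` and `g` lie in a common maximal coset of `K`, i.e. `f̄ = ḡ` in `L/K`. -/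
def SameMaxCoset (K : Set L) (f g : L) : Prop :=
  ∃ C, PG.IsMaxCoset K C ∧ f ∈ C ∧ g ∈ C

/-- `N_K(P,Q) = {x ∈ K : P ⊆ D(x), P^x ≤ Q}`. -/
def NBetween (K P Q : Set L) : Set L :=
  {x ∈ K | P ⊆ PG.Dset x ∧ PG.conjSet x P ⊆ Q}

/-- The normalizer `N_A(R) = {a ∈ A : R ⊆ D(a), R^a = R}`. -/
def NIn (A R : Set L) : Set L :=
  {a ∈ A | R ⊆ PG.Dset a ∧ PG.conjSet a R = R}

end PartialGroup

/-- A locality `(L, Δ, S)` in the sense of Chermak. -/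
structure Locality (L : Type u) extends PartialGroup L where
  finite : Finite L
  p : ℕ
  p_prime : p.Prime
  S : Set L
  Δ : Set (Set L)
  Δ_nonempty : Δ.Nonempty
  Δ_subgroups : ∀ P ∈ Δ, P ⊆ S ∧ toPartialGroup.IsSubgroup P
  L1 : toPartialGroup.IsPSubgroup p S ∧
    ∀ T : Set L, toPartialGroup.IsPSubgroup p T → S ⊆ T → S = T
  L2 : ∀ wrd : List L, wrd ∈ toPartialGroup.D ↔ toPartialGroup.InDVia Δ wrd
  L3 : ∀ Q : Set L, Q ⊆ S → toPartialGroup.IsSubgroup Q →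
    (∃ P ∈ Δ, ∃ g : L, P ⊆ toPartialGroup.Dset g ∧ toPartialGroup.conjSet g P ⊆ Q) → Q ∈ Δ

namespace Locality

variable {L : Type u} (Loc : Locality L)

/-- `S_g` for the locality. -/
def Sg (g : L) : Set L := Loc.toPartialGroup.Sg Loc.S g

/-- `S_w` for the locality. -/
def Sw (wrd : List L) : Set L := Loc.toPartialGroup.Sw Loc.S wrd

/-- The domain `L∘Δ` of the relation `↑_K`: pairs `(f,P)` with `P ∈ Δ` and `P ≤ S_f`. -/
def LDelta : Set (L × Set L) := {fP | fP.2 ∈ Loc.Δ ∧ fP.2 ⊆ Loc.Sg fP.1}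

/-- Chermak's relation `↑_K` on `L∘Δ`: `(f,P) ↑_K (g,Q)` iff there are
`x ∈ N_K(P,Q)` and `y ∈ N_K(P^f,Q^g)` with `xg = fy`. -/
def UpRel (K : Set L) (fP gQ : L × Set L) : Prop :=
  ∃ x ∈ Loc.toPartialGroup.NBetween K fP.2 gQ.2,
    ∃ y ∈ Loc.toPartialGroup.NBetween K
        (Loc.toPartialGroup.conjSet fP.1 fP.2) (Loc.toPartialGroup.conjSet gQ.1 gQ.2),
      [x, gQ.1] ∈ Loc.toPartialGroup.D ∧ [fP.1, y] ∈ Loc.toPartialGroup.D ∧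
        Loc.toPartialGroup.prod [x, gQ.1] = Loc.toPartialGroup.prod [fP.1, y]

/-- `f` is `↑_K`-maximal. -/
def UpMaximal (K : Set L) (f : L) : Prop :=
  ∀ gQ ∈ Loc.LDelta, Loc.UpRel K (f, Loc.Sg f) gQ → Loc.UpRel K gQ (f, Loc.Sg f)

end Locality

/-- `ρ : L → L'` realizes `Loc'` as the quotient locality `L/K`:
it is a surjective homomorphism of partial groups with kernel `K`, whose fibers
are the maximal cosets of `K`, and with `D̄ = Dρ*`, `S̄ = Sρ`, `Δ̄ = {P̄ : P ∈ Δ}`. -/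
structure IsQuotientMap {L : Type u} {L' : Type v} (Loc : Locality L) (K : Set L)
    (Loc' : Locality L') (ρ : L → L') : Prop where
  surj : Function.Surjective ρ
  D_eq : Loc'.D = (fun wrd : List L => wrd.map ρ) '' Loc.D
  hom : ∀ wrd ∈ Loc.D, Loc'.toPartialGroup.prod (wrd.map ρ) = ρ (Loc.toPartialGroup.prod wrd)
  ker : ∀ f : L, ρ f = ρ Loc.toPartialGroup.one ↔ f ∈ K
  fiber : ∀ f g : L, ρ f = ρ g ↔ Loc.toPartialGroup.SameMaxCoset K f g
  S_eq : Loc'.S = ρ '' Loc.S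
  Δ_eq : Loc'.Δ = (fun P : Set L => ρ '' P) '' Loc.Δ
  p_eq : Loc'.p = Loc.p

/-- Two groups `G1`, `G2` forming an amalgam inside a set `L`: both inject into `L`,
their ranges cover `L`, and the group structures agree on the intersection
(which is thereby a common subgroup). -/
structure Amalgam (G1 : Type u) (G2 : Type v) (L : Type w) [Group G1] [Group G2] where
  i1 : G1 → L
  i2 : G2 → L
  inj1 : Function.Injective i1
  inj2 : Function.Injective i2
  cover : Set.range i1 ∪ Set.range i2 = Set.univ
  one_eq : i1 1 = i2 1
  mul_compat : ∀ (a c : G1) (b d : G2), i1 a = i2 b → i1 c = i2 d → i1 (a * c) = i2 (b * d)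
  inv_compat : ∀ (a : G1) (b : G2), i1 a = i2 b → i1 a⁻¹ = i2 b⁻¹

/-- The partial group structure `PG` on `L` is the one associated to the amalgam `A`:
`D = W(G1) ∪ W(G2)`, with product and inversion the ones of the respective groups. -/
def Amalgam.Realizes {G1 : Type u} {G2 : Type v} {L : Type w} [Group G1] [Group G2]
    (A : Amalgam G1 G2 L) (PG : PartialGroup L) : Prop :=
  PG.D = {wrd | (∃ u : List G1, wrd = u.map A.i1) ∨ (∃ u : List G2, wrd = u.map A.i2)} ∧
  (∀ u : List G1, PG.prod (u.map A.i1) = A.i1 u.prod) ∧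
  (∀ u : List G2, PG.prod (u.map A.i2) = A.i2 u.prod) ∧
  (∀ a : G1, PG.inv (A.i1 a) = A.i1 a⁻¹) ∧
  (∀ b : G2, PG.inv (A.i2 b) = A.i2 b⁻¹)


namespace CE

abbrev G1 : Type := Multiplicative (ZMod 2) × Multiplicative (ZMod 4)
abbrev G2 : Type := DihedralGroup 8

def φ : G1 → G2 := fun a =>
  if a.1 = 1 then (if a.2 = 1 then .r 0 else .r 4)
  else (if a.2 = 1 then .sr 0 else .sr 4)

def ψ : G2 → G1 := fun b =>
  if b = .r 4 then (1, Multiplicative.ofAdd 2)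
  else if b = .sr 0 then (Multiplicative.ofAdd 1, 1)
  else if b = .sr 4 then (Multiplicative.ofAdd 1, Multiplicative.ofAdd 2)
  else 1

def inters : G2 → Prop := fun b =>
  b = .r 0 ∨ b = .r 4 ∨ b = .sr 0 ∨ b = .sr 4

instance : DecidablePred inters := fun b => inferInstanceAs (Decidable (_ ∨ _))

abbrev L : Type := G2 ⊕ {a : G1 // ¬ a * a = 1}

def i2 : G2 → L := Sum.inl
def i1 : G1 → L := fun a => if h : a * a = 1 then Sum.inl (φ a) else Sum.inr ⟨a, h⟩

def π1 : L → G1 := Sum.elim ψ Subtype.val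
def π2 : L → G2 := Sum.elim id (fun _ => 1)

def R1 : L → Prop := Sum.elim inters (fun _ => True)
def R2 : L → Prop := fun z => z.isLeft = true

instance : DecidablePred R1 := fun z => by cases z <;> simp [R1] <;> infer_instance
instance : DecidablePred R2 := fun z => inferInstanceAs (Decidable (_ = _))

-- decidable facts
lemma phi_inters : ∀ a : G1, a * a = 1 → inters (φ a) := by decide
lemma psi_phi : ∀ a : G1, a * a = 1 → ψ (φ a) = a := by decide
lemma phi_psi : ∀ b : G2, inters b → φ (ψ b) = b := by decide
lemma psi_sq : ∀ b : G2, inters b → ψ b * ψ b = 1 := by decide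
lemma inters_mul : ∀ b c : G2, inters b → inters c → inters (b * c) := by decide
lemma psi_mul : ∀ b c : G2, inters b → inters c → ψ (b * c) = ψ b * ψ c := by decide
lemma inters_inv : ∀ b : G2, inters b → inters b⁻¹ := by decide
lemma psi_inv : ∀ b : G2, inters b → ψ b⁻¹ = (ψ b)⁻¹ := by decide
lemma phi_mul : ∀ a c : G1, a * a = 1 → c * c = 1 → φ (a * c) = φ a * φ c := by decide
lemma phi_inv : ∀ a : G1, a * a = 1 → (φ a)⁻¹ = φ a⁻¹ := by decide
lemma phi_inj' : ∀ a c : G1, a * a = 1 → c * c = 1 → ¬ (φ a = φ c ∧ ¬ a = c) := by decide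
lemma phi_inj (a c : G1) (ha : a * a = 1) (hc : c * c = 1) (h : φ a = φ c) : a = c := by
  by_contra hne; exact phi_inj' a c ha hc ⟨h, hne⟩
lemma phi_one : φ 1 = 1 := by decide
lemma psi_one : ψ 1 = 1 := by decide
lemma inters_one : inters 1 := by decide

-- basic lemmas about i1 / π1 etc.
lemma R1_i1 (a : G1) : R1 (i1 a) := by
  unfold i1; split
  · exact phi_inters a ‹_›
  · trivial

lemma pi1_i1 (a : G1) : π1 (i1 a) = a := by
  unfold i1; split
  · exact psi_phi a ‹_›
  · rfl

lemma i1_pi1 {z : L} (h : R1 z) : i1 (π1 z) = z := by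
  cases z with
  | inl b =>
    have hb : inters b := h
    show i1 (ψ b) = _
    unfold i1; rw [dif_pos (psi_sq b hb)]
    rw [phi_psi b hb]
  | inr a =>
    show i1 a.val = _
    unfold i1; rw [dif_neg a.2]

lemma i2_pi2 {z : L} (h : R2 z) : i2 (π2 z) = z := by
  cases z with
  | inl b => rfl
  | inr a => simp [R2] at h

lemma pi2_i2 (b : G2) : π2 (i2 b) = b := rfl

lemma i1_eq_inl {a : G1} {b : G2} (h : i1 a = Sum.inl b) : a * a = 1 ∧ b = φ a := by
  unfold i1 at h; split at h
  · exact ⟨‹_›, (Sum.inl.inj h).symm⟩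
  · exact absurd h (by simp)

lemma i1_one : i1 1 = Sum.inl 1 := by
  unfold i1; rw [dif_pos (by decide)]; rw [phi_one]

-- inversion
def invL : L → L := Sum.elim (fun b => Sum.inl b⁻¹)
  (fun a => Sum.inr ⟨a.val⁻¹, fun h => a.2 (inv_eq_one.mp (by rwa [← mul_inv] at h))⟩)

lemma invL_i1 (a : G1) : invL (i1 a) = i1 a⁻¹ := by
  unfold i1
  by_cases h : a * a = 1
  · rw [dif_pos h, dif_pos (by rw [← mul_inv, h, inv_one])]
    show Sum.inl (φ a)⁻¹ = _
    rw [phi_inv a h]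
  · rw [dif_neg h, dif_neg (fun hh => h (inv_eq_one.mp (by rwa [← mul_inv] at hh)))]
    rfl

lemma invL_i2 (b : G2) : invL (i2 b) = i2 b⁻¹ := rfl

lemma R1_inv {z : L} (h : R1 z) : R1 (invL z) := by
  cases z with
  | inl b => exact inters_inv b h
  | inr a => trivial

lemma R2_inv {z : L} (h : R2 z) : R2 (invL z) := by
  cases z with
  | inl b => rfl
  | inr a => simp [R2] at h

lemma pi1_inv {z : L} (h : R1 z) : π1 (invL z) = (π1 z)⁻¹ := by
  cases z with
  | inl b => exact psi_inv b h
  | inr a => rfl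

lemma pi2_inv {z : L} (h : R2 z) : π2 (invL z) = (π2 z)⁻¹ := by
  cases z with
  | inl b => rfl
  | inr a => simp [R2] at h

lemma invL_invL (z : L) : invL (invL z) = z := by
  cases z with
  | inl b => show Sum.inl b⁻¹⁻¹ = _; rw [inv_inv]
  | inr a => show Sum.inr _ = _; simp

-- domain and product
def DL : Set (List L) := {w | (∀ z ∈ w, R1 z) ∨ (∀ z ∈ w, R2 z)}

def prodL : List L → L := fun w =>
  if ∀ z ∈ w, R1 z then i1 ((w.map π1).prod) else i2 ((w.map π2).prod)

lemma prodL_R1 (w : List L) (h : ∀ z ∈ w, R1 z) : prodL w = i1 ((w.map π1).prod) :=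
  if_pos h

lemma key (w : List L) (h1 : ∀ z ∈ w, R1 z) (h2 : ∀ z ∈ w, R2 z) :
    (w.map π1).prod = ψ ((w.map π2).prod) ∧ inters ((w.map π2).prod) := by
  induction w with
  | nil => exact ⟨psi_one.symm, inters_one⟩
  | cons z w ih =>
    obtain ⟨ihp, ihi⟩ := ih (fun x hx => h1 x (List.mem_cons_of_mem _ hx))
      (fun x hx => h2 x (List.mem_cons_of_mem _ hx))
    cases z with
    | inl b =>
      have hb : inters b := h1 _ List.mem_cons_self
      refine ⟨?_, inters_mul _ _ hb ihi⟩
      show ψ b * (w.map π1).prod = ψ (b * (w.map π2).prod)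
      rw [psi_mul _ _ hb ihi, ihp]
    | inr a => exact absurd (h2 _ List.mem_cons_self) (by simp [R2])

lemma prodL_R2 (w : List L) (h : ∀ z ∈ w, R2 z) : prodL w = i2 ((w.map π2).prod) := by
  unfold prodL
  split
  · rename_i h1
    obtain ⟨hp, hi⟩ := key w h1 h
    rw [hp]
    show i1 _ = Sum.inl _
    unfold i1
    rw [dif_pos (psi_sq _ hi), phi_psi _ hi]
  · rfl

lemma R1_prodL (w : List L) (h : ∀ z ∈ w, R1 z) : R1 (prodL w) := by
  rw [prodL_R1 w h]; exact R1_i1 _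

lemma R2_prodL (w : List L) (h : ∀ z ∈ w, R2 z) : R2 (prodL w) := by
  rw [prodL_R2 w h]; rfl

lemma prodL_nil : prodL [] = i1 1 := by
  rw [prodL_R1 _ (by simp)]; rfl

-- the partial group
def PG : PartialGroup L where
  D := DL
  prod := prodL
  inv := invL
  nil_mem := Or.inl (by simp)
  single_mem := fun f => by
    cases f with
    | inl b => exact Or.inr (by simp [R2])
    | inr a => exact Or.inl (by simp [R1])
  append_closed := fun u v h => by
    rcases h with h | h
    · exact ⟨Or.inl fun z hz => h z (by simp [hz]), Or.inl fun z hz => h z (by simp [hz])⟩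
    · exact ⟨Or.inr fun z hz => h z (by simp [hz]), Or.inr fun z hz => h z (by simp [hz])⟩
  prod_single := fun f => by
    cases f with
    | inl b =>
      rw [prodL_R2 _ (by simp [R2])]
      simp [i2, π2]
    | inr a =>
      rw [prodL_R1 _ (by simp [R1])]
      simp only [List.map_cons, List.map_nil, List.prod_cons, List.prod_nil, mul_one]
      exact i1_pi1 (by trivial)
  prod_assoc := fun u v w h => by
    rcases h with h | h
    · have hu : ∀ z ∈ u, R1 z := fun z hz => h z (by simp [hz])
      have hv : ∀ z ∈ v, R1 z := fun z hz => h z (by simp [hz])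
      have hw : ∀ z ∈ w, R1 z := fun z hz => h z (by simp [hz])
      have hmid : ∀ z ∈ u ++ [prodL v] ++ w, R1 z := by
        intro z hz
        simp only [List.mem_append, List.mem_singleton] at hz
        rcases hz with (hz | rfl) | hz
        · exact hu z hz
        · exact R1_prodL v hv
        · exact hw z hz
      refine ⟨Or.inl hmid, ?_⟩
      rw [prodL_R1 _ (fun z hz => h z hz), prodL_R1 _ hmid, prodL_R1 v hv]
      congr 1
      simp [List.prod_append, pi1_i1, mul_assoc]
    · have hu : ∀ z ∈ u, R2 z := fun z hz => h z (by simp [hz])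
      have hv : ∀ z ∈ v, R2 z := fun z hz => h z (by simp [hz])
      have hw : ∀ z ∈ w, R2 z := fun z hz => h z (by simp [hz])
      have hmid : ∀ z ∈ u ++ [prodL v] ++ w, R2 z := by
        intro z hz
        simp only [List.mem_append, List.mem_singleton] at hz
        rcases hz with (hz | rfl) | hz
        · exact hu z hz
        · exact R2_prodL v hv
        · exact hw z hz
      refine ⟨Or.inr hmid, ?_⟩
      rw [prodL_R2 _ (fun z hz => h z hz), prodL_R2 _ hmid, prodL_R2 v hv]
      congr 1
      simp [List.prod_append, pi2_i2, mul_assoc]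
  inv_inv := invL_invL
  inv_word_mem := fun u h => by
    rcases h with h | h
    · refine Or.inl fun z hz => ?_
      simp only [List.mem_append] at hz
      rcases hz with hz | hz
      · obtain ⟨x, hx, rfl⟩ := List.mem_map.mp hz
        exact R1_inv (h x (List.mem_reverse.mp hx))
      · exact h z hz
    · refine Or.inr fun z hz => ?_
      simp only [List.mem_append] at hz
      rcases hz with hz | hz
      · obtain ⟨x, hx, rfl⟩ := List.mem_map.mp hz
        exact R2_inv (h x (List.mem_reverse.mp hx))
      · exact h z hz
  prod_inv_word := fun u h => by
    rcases h with h | h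
    · have hall : ∀ z ∈ (u.reverse.map invL) ++ u, R1 z := by
        intro z hz
        simp only [List.mem_append] at hz
        rcases hz with hz | hz
        · obtain ⟨x, hx, rfl⟩ := List.mem_map.mp hz
          exact R1_inv (h x (List.mem_reverse.mp hx))
        · exact h z hz
      rw [prodL_R1 _ hall, prodL_nil]
      congr 1
      have hmapinv : (u.reverse.map invL).map π1
          = ((u.map π1).map (fun x => x⁻¹)).reverse := by
        rw [List.map_map, List.map_map, ← List.map_reverse]
        exact List.map_congr_left fun x hx =>
          pi1_inv (h x (List.mem_reverse.mp hx))
      rw [List.map_append, List.prod_append, hmapinv, ← List.prod_inv_reverse,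
        inv_mul_cancel]
    · have hall : ∀ z ∈ (u.reverse.map invL) ++ u, R2 z := by
        intro z hz
        simp only [List.mem_append] at hz
        rcases hz with hz | hz
        · obtain ⟨x, hx, rfl⟩ := List.mem_map.mp hz
          exact R2_inv (h x (List.mem_reverse.mp hx))
        · exact h z hz
      rw [prodL_R2 _ hall, prodL_nil, i1_one]
      have hmapinv : (u.reverse.map invL).map π2
          = ((u.map π2).map (fun x => x⁻¹)).reverse := by
        rw [List.map_map, List.map_map, ← List.map_reverse]
        exact List.map_congr_left fun x hx =>
          pi2_inv (h x (List.mem_reverse.mp hx))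
      show Sum.inl _ = Sum.inl (1 : G2)
      rw [List.map_append, List.prod_append, hmapinv, ← List.prod_inv_reverse,
        inv_mul_cancel]

def gN : G1 := (Multiplicative.ofAdd 1, Multiplicative.ofAdd 1)

def M' : Subgroup G1 where
  carrier := {a | a.1 = 1}
  one_mem' := rfl
  mul_mem' := by
    intro a b ha hb
    show (a * b).1 = 1
    rw [Prod.fst_mul, ha, hb, mul_one]
  inv_mem' := by
    intro a ha
    show a⁻¹.1 = 1
    rw [Prod.fst_inv, ha, inv_one]

def N' : Subgroup G1 where
  carrier := {a | a = 1 ∨ a = gN ∨ a = gN * gN ∨ a = gN * gN * gN}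
  one_mem' := Or.inl rfl
  mul_mem' := by
    intro a b ha hb
    rcases ha with rfl|rfl|rfl|rfl <;> rcases hb with rfl|rfl|rfl|rfl <;> decide
  inv_mem' := by
    intro a ha
    rcases ha with rfl|rfl|rfl|rfl <;> decide

instance : DecidablePred (· ∈ M') := fun a => inferInstanceAs (Decidable (a.1 = 1))
instance : DecidablePred (· ∈ N') := fun a => inferInstanceAs (Decidable (_ ∨ _))

lemma cardM : Nat.card M' = 4 := by rw [Nat.card_eq_fintype_card]; decide
lemma cardN : Nat.card N' = 4 := by rw [Nat.card_eq_fintype_card]; decide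

lemma cycM : IsCyclic M' := by
  apply isCyclic_of_orderOf_eq_card (⟨(1, Multiplicative.ofAdd 1), rfl⟩ : M')
  rw [cardM]
  rw [orderOf_eq_iff (by norm_num)]
  refine ⟨Subtype.ext (by decide), ?_⟩
  intro m hm hm' heq
  interval_cases m <;> exact absurd (congrArg Subtype.val heq) (by decide)

lemma cycN : IsCyclic N' := by
  apply isCyclic_of_orderOf_eq_card (⟨gN, Or.inr (Or.inl rfl)⟩ : N')
  rw [cardN]
  rw [orderOf_eq_iff (by norm_num)]
  refine ⟨Subtype.ext (by decide), ?_⟩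
  intro m hm hm' heq
  interval_cases m <;> exact absurd (congrArg Subtype.val heq) (by decide)

lemma MneN : M' ≠ N' := by
  intro h
  have : gN ∈ M' := by rw [h]; exact Or.inr (Or.inl rfl)
  exact (by decide : ¬ ((gN : G1).1 = 1)) this

lemma Msurj : ∀ a : G1, ∃ m n : G1, m ∈ M' ∧ n ∈ N' ∧ a = m * n := by
  intro a
  have : ∃ m n : G1, m.1 = 1 ∧
      (n = 1 ∨ n = gN ∨ n = gN * gN ∨ n = gN * gN * gN) ∧ a = m * n := by
    revert a; decide
  exact this

-- centrality lemmas
lemma M_central' : ∀ a : G1, ∀ c : G2,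
    ¬ (a.1 = 1 ∧ a * a = 1 ∧ ¬ (c⁻¹ * (φ a * c) = φ a)) := by decide
lemma N_central' : ∀ a : G1, ∀ c : G2,
    ¬ ((a = 1 ∨ a = gN ∨ a = gN * gN ∨ a = gN * gN * gN) ∧ a * a = 1 ∧
      ¬ (c⁻¹ * (φ a * c) = φ a)) := by decide

lemma M_central (a : G1) (ha : a ∈ M') (hsq : a * a = 1) (c : G2) :
    c⁻¹ * (φ a * c) = φ a := by
  by_contra hc; exact M_central' a c ⟨ha, hsq, hc⟩

lemma N_central (a : G1) (ha : a ∈ N') (hsq : a * a = 1) (c : G2) :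
    c⁻¹ * (φ a * c) = φ a := by
  by_contra hc; exact N_central' a c ⟨ha, hsq, hc⟩

-- the amalgam
def A : Amalgam G1 G2 L where
  i1 := i1
  i2 := i2
  inj1 := by
    intro a c h
    unfold i1 at h
    split at h <;> split at h
    · exact phi_inj _ _ ‹_› ‹_› (Sum.inl.inj h)
    · exact absurd h (by simp)
    · exact absurd h (by simp)
    · exact congrArg Subtype.val (Sum.inr.inj h)
  inj2 := fun a b h => Sum.inl.inj h
  cover := by
    ext z
    simp only [Set.mem_union, Set.mem_range, Set.mem_univ, iff_true]
    cases z with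
    | inl b => exact Or.inr ⟨b, rfl⟩
    | inr a => exact Or.inl ⟨a.val, by unfold i1; rw [dif_neg a.2]⟩
  one_eq := by rw [i1_one]; rfl
  mul_compat := by
    intro a c b d hab hcd
    obtain ⟨ha, rfl⟩ := i1_eq_inl hab
    obtain ⟨hc, rfl⟩ := i1_eq_inl hcd
    have hac : (a * c) * (a * c) = 1 := by
      rw [mul_mul_mul_comm, ha, hc, one_mul]
    show i1 (a * c) = Sum.inl (φ a * φ c)
    unfold i1
    rw [dif_pos hac, phi_mul a c ha hc]
  inv_compat := by
    intro a b hab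
    obtain ⟨ha, rfl⟩ := i1_eq_inl hab
    rw [← invL_i1, hab]
    rfl

lemma prod_map1 (u : List G1) : prodL (u.map i1) = i1 u.prod := by
  rw [prodL_R1 _ (fun z hz => by
    obtain ⟨a, _, rfl⟩ := List.mem_map.mp hz; exact R1_i1 a)]
  congr 1
  rw [List.map_map]
  exact congrArg List.prod
    ((List.map_congr_left fun a _ => pi1_i1 a).trans (List.map_id u))

lemma prod_map2 (u : List G2) : prodL (u.map i2) = i2 u.prod := by
  rw [prodL_R2 _ (fun z hz => by
    obtain ⟨b, _, rfl⟩ := List.mem_map.mp hz; rfl)]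
  congr 1
  rw [List.map_map]
  exact congrArg List.prod
    ((List.map_congr_left fun b _ => rfl).trans (List.map_id u))

lemma realizes : A.Realizes PG := by
  refine ⟨?_, prod_map1, prod_map2, invL_i1, invL_i2⟩
  ext w
  show w ∈ DL ↔ _
  constructor
  · rintro (h | h)
    · refine Or.inl ⟨w.map π1, ?_⟩
      rw [List.map_map]
      conv_lhs => rw [← List.map_id w]
      exact (List.map_congr_left fun z hz => (i1_pi1 (h z hz))).symm
    · refine Or.inr ⟨w.map π2, ?_⟩
      rw [List.map_map]
      conv_lhs => rw [← List.map_id w]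
      exact (List.map_congr_left fun z hz => (i2_pi2 (h z hz))).symm
  · rintro (⟨u, rfl⟩ | ⟨u, rfl⟩)
    · exact Or.inl fun z hz => by
        obtain ⟨a, _, rfl⟩ := List.mem_map.mp hz; exact R1_i1 a
    · exact Or.inr fun z hz => by
        obtain ⟨b, _, rfl⟩ := List.mem_map.mp hz; rfl

lemma inter_eq : Set.range i1 ∩ Set.range i2 = Sum.inl '' {b | inters b} := by
  ext z
  constructor
  · rintro ⟨⟨a, rfl⟩, ⟨b, hb⟩⟩
    obtain ⟨hsq, rfl⟩ := i1_eq_inl hb.symm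
    exact ⟨φ a, phi_inters a hsq, hb⟩
  · rintro ⟨b, hb, rfl⟩
    exact ⟨⟨ψ b, by unfold i1; rw [dif_pos (psi_sq b hb), phi_psi b hb]⟩, ⟨b, rfl⟩⟩

lemma inter_card : Nat.card (Set.range i1 ∩ Set.range i2 : Set L) = 4 := by
  rw [inter_eq, Nat.card_coe_set_eq,
    Set.ncard_image_of_injective _ Sum.inl_injective,
    show {b : G2 | inters b}
      = (↑({DihedralGroup.r 0, DihedralGroup.r 4, DihedralGroup.sr 0,
          DihedralGroup.sr 4} : Finset G2) : Set G2) by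
        ext b; simp [inters],
    Set.ncard_coe_finset]
  decide

lemma partialNormal (H : Subgroup G1)
    (hcent : ∀ a : G1, a ∈ H → a * a = 1 → ∀ c : G2, c⁻¹ * (φ a * c) = φ a) :
    PG.IsPartialNormal (i1 '' (H : Set G1)) := by
  refine ⟨⟨⟨i1 1, 1, H.one_mem, rfl⟩, ?_, ?_⟩, ?_⟩
  · rintro h ⟨a, ha, rfl⟩
    show invL (i1 a) ∈ _
    rw [invL_i1]
    exact ⟨a⁻¹, H.inv_mem ha, rfl⟩
  · intro v hv hmem
    have hR1 : ∀ z ∈ v, R1 z := fun z hz => by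
      obtain ⟨a, _, rfl⟩ := hmem z hz; exact R1_i1 a
    show prodL v ∈ _
    rw [prodL_R1 v hR1]
    refine ⟨(v.map π1).prod, ?_, rfl⟩
    apply list_prod_mem
    intro x hx
    obtain ⟨z, hz, rfl⟩ := List.mem_map.mp hx
    obtain ⟨a, haH, rfl⟩ := hmem z hz
    rwa [pi1_i1]
  · rintro x ⟨a, haH, rfl⟩ f hDf
    have hDf' : [invL f, i1 a, f] ∈ DL := hDf
    show prodL [invL f, i1 a, f] ∈ _
    rcases hDf' with h | h
    · have hf : R1 f := h f (by simp)
      rw [prodL_R1 _ h]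
      have hval : (List.map π1 [invL f, i1 a, f]).prod = a := by
        simp only [List.map_cons, List.map_nil, List.prod_cons, List.prod_nil,
          mul_one, pi1_i1, pi1_inv hf]
        rw [mul_comm a (π1 f), inv_mul_cancel_left]
      rw [hval]
      exact ⟨a, haH, rfl⟩
    · have hx2 : R2 (i1 a) := h (i1 a) (by simp)
      have hsq : a * a = 1 := by
        unfold i1 at hx2
        split at hx2
        · assumption
        · simp [R2] at hx2
      have hf : R2 f := h f (by simp)
      rw [prodL_R2 _ h]
      have hpx : π2 (i1 a) = φ a := by
        unfold i1; rw [dif_pos hsq]; rfl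
      have hval : (List.map π2 [invL f, i1 a, f]).prod = φ a := by
        simp only [List.map_cons, List.map_nil, List.prod_cons, List.prod_nil,
          mul_one, hpx, pi2_inv hf]
        exact hcent a haH hsq (π2 f)
      rw [hval]
      have : i2 (φ a) = i1 a := by unfold i1 i2; rw [dif_pos hsq]
      rw [this]
      exact ⟨a, haH, rfl⟩

lemma prod_pair (a c : G1) : prodL [i1 a, i1 c] = i1 (a * c) := by
  have : ([i1 a, i1 c] : List L) = [a, c].map i1 := rfl
  rw [this, prod_map1]
  congr 1
  simp

lemma setProd_eq : PG.setProd (i1 '' (M' : Set G1)) (i1 '' (N' : Set G1))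
    = Set.range i1 := by
  ext z
  constructor
  · rintro ⟨m, ⟨am, _, rfl⟩, n, ⟨an, _, rfl⟩, _, rfl⟩
    exact ⟨am * an, (prod_pair am an).symm⟩
  · rintro ⟨a, rfl⟩
    obtain ⟨m, n, hm, hn, rfl⟩ := Msurj a
    refine ⟨i1 m, ⟨m, hm, rfl⟩, i1 n, ⟨n, hn, rfl⟩, ?_, (prod_pair m n).symm⟩
    exact Or.inl fun z hz => by
      simp only [List.mem_cons, List.not_mem_nil, or_false] at hz
      rcases hz with rfl | rfl <;> exact R1_i1 _

lemma not_normal : ¬ PG.IsPartialNormal (Set.range i1) := by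
  intro hnorm
  set x : L := Sum.inl (DihedralGroup.sr 0) with hxdef
  set f : L := Sum.inl (DihedralGroup.r 1) with hfdef
  have hx1 : i1 ((Multiplicative.ofAdd 1, 1) : G1) = x := by
    unfold i1
    rw [dif_pos (by decide)]
    exact congrArg Sum.inl (by decide)
  have hDf : x ∈ PG.Dset f := by
    show [invL f, x, f] ∈ DL
    refine Or.inr fun z hz => ?_
    simp only [List.mem_cons, List.not_mem_nil, or_false] at hz
    rcases hz with rfl | rfl | rfl <;> rfl
  have hc := hnorm.2 x ⟨_, hx1⟩ f hDf
  have hR2 : ∀ z ∈ ([invL f, x, f] : List L), R2 z := fun z hz => by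
    simp only [List.mem_cons, List.not_mem_nil, or_false] at hz
    rcases hz with rfl | rfl | rfl <;> rfl
  have hval : PG.conj f x
      = Sum.inl ((DihedralGroup.r 1)⁻¹ * (DihedralGroup.sr 0 * (DihedralGroup.r 1 * 1))) := by
    show prodL [invL f, x, f] = _
    rw [prodL_R2 _ hR2]
    rfl
  rw [hval] at hc
  obtain ⟨a, ha⟩ := hc
  obtain ⟨hsq, hb⟩ := i1_eq_inl ha
  have : inters ((DihedralGroup.r 1)⁻¹ * (DihedralGroup.sr 0 * (DihedralGroup.r 1 * 1))) :=
    hb ▸ phi_inters a hsq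
  exact (by decide : ¬ inters
    ((DihedralGroup.r 1)⁻¹ * (DihedralGroup.sr 0 * (DihedralGroup.r 1 * 1)))) this

end CE


/-- there is a partial group `L` with partial normal subgroups `M`, `N`
whose product `MN` is not a partial normal subgroup. Concretely, `L = G1 ∪ G2` for an
amalgam of `G1 ≅ C2 × C4` and `G2` dihedral of order 16 with `G1 ∩ G2 ≅ C2 × C2`,
and `M`, `N` are the two cyclic subgroups of `G1` of order 4; then `MN = G1` is not
a partial normal subgroup of `L`. -/
theorem product_of_partial_normals_not_normal :
    ∃ (G1 G2 L : Type) (_ : Group G1) (_ : Group G2) (A : Amalgam G1 G2 L)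
      (PG : PartialGroup L) (M N : Set L),
      Nonempty (G1 ≃* Multiplicative (ZMod 2) × Multiplicative (ZMod 4)) ∧
      Nonempty (G2 ≃* DihedralGroup 8) ∧
      A.Realizes PG ∧
      Nat.card (Set.range A.i1 ∩ Set.range A.i2 : Set L) = 4 ∧
      (∃ M' N' : Subgroup G1, IsCyclic M' ∧ Nat.card M' = 4 ∧ IsCyclic N' ∧
        Nat.card N' = 4 ∧ M' ≠ N' ∧ M = A.i1 '' (M' : Set G1) ∧ N = A.i1 '' (N' : Set G1)) ∧
      PG.IsPartialNormal M ∧ PG.IsPartialNormal N ∧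
      PG.setProd M N = Set.range A.i1 ∧
      ¬ PG.IsPartialNormal (PG.setProd M N) := by
  refine ⟨CE.G1, CE.G2, CE.L, inferInstance, inferInstance, CE.A, CE.PG,
    CE.i1 '' (CE.M' : Set CE.G1), CE.i1 '' (CE.N' : Set CE.G1),
    ⟨MulEquiv.refl _⟩, ⟨MulEquiv.refl _⟩, CE.realizes, CE.inter_card,
    ⟨CE.M', CE.N', CE.cycM, CE.cardM, CE.cycN, CE.cardN, CE.MneN, rfl, rfl⟩,
    CE.partialNormal CE.M' (fun a ha hsq c => CE.M_central a ha hsq c),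
    CE.partialNormal CE.N' (fun a ha hsq c => CE.N_central a ha hsq c),
    CE.setProd_eq, ?_⟩
  rw [CE.setProd_eq]
  exact CE.not_normal
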